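/- Define B_H(σ²) = |σ² - 1|/√(2 - σ²) for σ² ∈ (0,2). For p_⋆ = N(μ, σ²) with σ² ∈ (0,2), D_H(p_⋆, p₂) = D_H(p_⋆, p₁) if and only if |μ| = B_H(σ²), D_H(p_⋆,p₂) > D_H(p_⋆,p₁) iff |μ| > B_H(σ²), and < iff <, where p₁ = N(μ,1), p₂ = N(0, μ² + σ²). -/

import Mathlib

open MeasureTheory Real

/-- Density of a Normal distribution with mean `m` and variance `v`. -/
noncomputable def normalPDF (m v y : ℝ) : ℝ :=
  (Real.sqrt (2 * Real.pi * v))⁻¹ * Real.exp (-(y - m) ^ 2 / (2 * v))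

/-- Relative Fisher information divergence between positive densities `p` and `q`. -/
noncomputable def relFisher (p q : ℝ → ℝ) : ℝ :=
  ∫ y : ℝ, (deriv (fun w => Real.log (p w)) y - deriv (fun w => Real.log (q w)) y) ^ 2 * p y

/-- Boundary function `B_H(σ²) = |σ²-1|/√(2-σ²)` for `σ² ∈ (0,2)`. -/
noncomputable def BH (v : ℝ) : ℝ := |v - 1| / Real.sqrt (2 - v)

lemma deriv_log_normalPDF (m : ℝ) {v : ℝ} (hv : 0 < v) (y : ℝ) :
    deriv (fun w => Real.log (normalPDF m v w)) y = (m - y) / v := by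
  have hc : (Real.sqrt (2 * Real.pi * v))⁻¹ ≠ 0 := by positivity
  have heq : (fun w => Real.log (normalPDF m v w)) =
      fun w => Real.log ((Real.sqrt (2 * Real.pi * v))⁻¹) + (-(w - m) ^ 2 / (2 * v)) := by
    funext w
    rw [normalPDF, Real.log_mul hc (Real.exp_ne_zero _), Real.log_exp]
  rw [heq]
  have h : HasDerivAt (fun w : ℝ => Real.log ((Real.sqrt (2 * Real.pi * v))⁻¹) +
      (-(w - m) ^ 2 / (2 * v))) ((m - y) / v) y := by
    have h1 : HasDerivAt (fun w : ℝ => (w - m) ^ 2) (2 * (y - m)) y := by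
      simpa using ((hasDerivAt_id y).sub_const m).fun_pow 2
    have := ((h1.fun_neg).div_const (2 * v)).const_add
      (Real.log ((Real.sqrt (2 * Real.pi * v))⁻¹))
    rw [show (m - y) / v = -(2 * (y - m)) / (2 * v) by
      rw [div_eq_div_iff hv.ne' (by positivity)]; ring]
    exact this
  exact h.deriv

lemma integrable_sq_mul_exp {b : ℝ} (hb : 0 < b) :
    Integrable fun x : ℝ => x ^ 2 * Real.exp (-b * x ^ 2) := by
  have := integrable_rpow_mul_exp_neg_mul_sq hb (s := 2) (by norm_num)
  simpa [Real.rpow_natCast] using this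

lemma integral_x_mul_exp {b : ℝ} : ∫ x : ℝ, x * Real.exp (-b * x ^ 2) = 0 := by
  have h := integral_neg_eq_self (fun x : ℝ => x * Real.exp (-b * x ^ 2)) volume
  simp only [neg_sq, neg_mul] at h
  simp only [neg_mul]
  have : ∫ x : ℝ, -(x * Real.exp (-(b * x ^ 2))) = ∫ x : ℝ, x * Real.exp (-(b * x ^ 2)) := h
  rw [integral_neg] at this
  have h0 : ∫ x : ℝ, x * Real.exp (-(b * x ^ 2)) = 0 := by linarith
  simpa [neg_mul] using h0

lemma integral_sq_mul_exp {b : ℝ} (hb : 0 < b) :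
    ∫ x : ℝ, x ^ 2 * Real.exp (-b * x ^ 2) = (2 * b)⁻¹ * Real.sqrt (π / b) := by
  have hu : ∀ x : ℝ, HasDerivAt (fun x : ℝ => x) 1 x := fun x => hasDerivAt_id x
  have hv : ∀ x : ℝ, HasDerivAt (fun x : ℝ => Real.exp (-b * x ^ 2))
      (Real.exp (-b * x ^ 2) * (-b * (2 * x))) x := by
    intro x
    have h1 : HasDerivAt (fun x : ℝ => -b * x ^ 2) (-b * (2 * x)) x := by
      simpa using ((hasDerivAt_pow 2 x).const_mul (-b))
    exact h1.exp
  have huv' : Integrable (fun x : ℝ => x * (Real.exp (-b * x ^ 2) * (-b * (2 * x)))) := by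
    have : (fun x : ℝ => x * (Real.exp (-b * x ^ 2) * (-b * (2 * x)))) =
        fun x : ℝ => (-2 * b) * (x ^ 2 * Real.exp (-b * x ^ 2)) := by
      funext x; ring
    rw [this]
    exact (integrable_sq_mul_exp hb).const_mul _
  have hu'v : Integrable (fun x : ℝ => (1 : ℝ) * Real.exp (-b * x ^ 2)) := by
    simpa using integrable_exp_neg_mul_sq hb
  have huv : Integrable (fun x : ℝ => x * Real.exp (-b * x ^ 2)) :=
    integrable_mul_exp_neg_mul_sq hb
  have key := integral_mul_deriv_eq_deriv_mul_of_integrable (fun x _ => hu x) (fun x _ => hv x) huv' hu'v huv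
  rw [show (∫ x : ℝ, x * (Real.exp (-b * x ^ 2) * (-b * (2 * x)))) =
      (-2 * b) * ∫ x : ℝ, x ^ 2 * Real.exp (-b * x ^ 2) by
    rw [← MeasureTheory.integral_const_mul]; congr 1; funext x; ring] at key
  have hg : (∫ x : ℝ, (1 : ℝ) * Real.exp (-b * x ^ 2)) = Real.sqrt (π / b) := by
    simp only [one_mul]
    exact integral_gaussian b
  rw [hg] at key
  have h2b : (0:ℝ) < 2 * b := by positivity
  rw [inv_mul_eq_div, eq_div_iff h2b.ne']
  linarith

lemma integral_quad {v : ℝ} (hv : 0 < v) (μ a c : ℝ) :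
    ∫ y : ℝ, (a * (y - μ) + c) ^ 2 * normalPDF μ v y = a ^ 2 * v + c ^ 2 := by
  have hb : (0:ℝ) < (2 * v)⁻¹ := by positivity
  set b : ℝ := (2 * v)⁻¹ with hb_def
  set C : ℝ := (Real.sqrt (2 * Real.pi * v))⁻¹ with hC_def
  have hpdf : ∀ x : ℝ, normalPDF μ v (x + μ) = C * Real.exp (-b * x ^ 2) := by
    intro x
    rw [normalPDF]
    congr 2
    rw [hb_def]
    ring
  have step1 : ∫ y : ℝ, (a * (y - μ) + c) ^ 2 * normalPDF μ v y
      = ∫ x : ℝ, (a * x + c) ^ 2 * (C * Real.exp (-b * x ^ 2)) := by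
    rw [← MeasureTheory.integral_add_right_eq_self
      (fun y => (a * (y - μ) + c) ^ 2 * normalPDF μ v y) μ]
    congr 1
    funext x
    rw [hpdf, add_sub_cancel_right]
  rw [step1]
  have hfe : (fun x : ℝ => (a * x + c) ^ 2 * (C * Real.exp (-b * x ^ 2)))
      = fun x : ℝ => (C * a ^ 2) * (x ^ 2 * Real.exp (-b * x ^ 2))
        + ((C * (2 * a * c)) * (x * Real.exp (-b * x ^ 2))
          + (C * c ^ 2) * Real.exp (-b * x ^ 2)) := by
    funext x; ring
  have i2 : Integrable fun x : ℝ => (C * a ^ 2) * (x ^ 2 * Real.exp (-b * x ^ 2)) :=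
    (integrable_sq_mul_exp hb).const_mul _
  have i1 : Integrable fun x : ℝ => (C * (2 * a * c)) * (x * Real.exp (-b * x ^ 2)) :=
    (integrable_mul_exp_neg_mul_sq hb).const_mul _
  have i0 : Integrable fun x : ℝ => (C * c ^ 2) * Real.exp (-b * x ^ 2) :=
    (integrable_exp_neg_mul_sq hb).const_mul _
  have i10 : Integrable (fun x : ℝ => (C * (2 * a * c)) * (x * Real.exp (-b * x ^ 2))
      + (C * c ^ 2) * Real.exp (-b * x ^ 2)) := i1.add i0
  rw [hfe, integral_add i2 i10, integral_add i1 i0,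
    MeasureTheory.integral_const_mul, MeasureTheory.integral_const_mul,
    MeasureTheory.integral_const_mul, integral_x_mul_exp, integral_sq_mul_exp hb,
    integral_gaussian]
  have h1 : (2 * b)⁻¹ = v := by rw [hb_def]; field_simp
  have h2 : Real.sqrt (π / b) = Real.sqrt (2 * π * v) := by
    rw [hb_def]
    congr 1
    field_simp
  have h3 : C * Real.sqrt (2 * π * v) = 1 := by
    rw [hC_def]
    have : Real.sqrt (2 * π * v) ≠ 0 := by positivity
    field_simp
  rw [h1, h2]
  calc C * a ^ 2 * (v * Real.sqrt (2 * π * v)) + (C * (2 * a * c) * 0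
        + C * c ^ 2 * Real.sqrt (2 * π * v))
      = (C * Real.sqrt (2 * π * v)) * (a ^ 2 * v) + (C * Real.sqrt (2 * π * v)) * c ^ 2 := by
        ring
    _ = a ^ 2 * v + c ^ 2 := by rw [h3]; ring

lemma relFisher_normal {v v2 : ℝ} (hv : 0 < v) (hv2 : 0 < v2) (μ m2 : ℝ) :
    relFisher (normalPDF μ v) (normalPDF m2 v2)
      = (v2⁻¹ - v⁻¹) ^ 2 * v + ((μ - m2) / v2) ^ 2 := by
  rw [relFisher]
  have heq : ∀ y : ℝ,
      (deriv (fun w => Real.log (normalPDF μ v w)) y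
        - deriv (fun w => Real.log (normalPDF m2 v2 w)) y) ^ 2 * normalPDF μ v y
      = ((v2⁻¹ - v⁻¹) * (y - μ) + (μ - m2) / v2) ^ 2 * normalPDF μ v y := by
    intro y
    rw [deriv_log_normalPDF μ hv, deriv_log_normalPDF m2 hv2]
    congr 1
    rw [div_sub_div _ _ hv.ne' hv2.ne']
    field_simp
    ring
  simp only [heq]
  exact integral_quad hv μ _ _

/-- For `p⋆ = N(μ,σ²)` with `σ² ∈ (0,2)`, `p₁ = N(μ,1)`, `p₂ = N(0,μ²+σ²)`, the relative
Fisher divergences compare according to the boundary `B_H`. -/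
theorem relFisher_boundary (μ v : ℝ) (hv0 : 0 < v) (hv2 : v < 2) :
    (relFisher (normalPDF μ v) (normalPDF 0 (μ ^ 2 + v)) =
        relFisher (normalPDF μ v) (normalPDF μ 1) ↔ |μ| = BH v) ∧
      (relFisher (normalPDF μ v) (normalPDF 0 (μ ^ 2 + v)) >
        relFisher (normalPDF μ v) (normalPDF μ 1) ↔ |μ| > BH v) ∧
      (relFisher (normalPDF μ v) (normalPDF 0 (μ ^ 2 + v)) <
        relFisher (normalPDF μ v) (normalPDF μ 1) ↔ |μ| < BH v) := by
  have hs : (0:ℝ) < μ ^ 2 + v := by positivity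
  have h2v : (0:ℝ) < 2 - v := by linarith
  have hD2 : relFisher (normalPDF μ v) (normalPDF 0 (μ ^ 2 + v))
      = μ ^ 2 / ((μ ^ 2 + v) * v) := by
    rw [relFisher_normal hv0 hs μ 0]
    field_simp
    ring
  have hD1 : relFisher (normalPDF μ v) (normalPDF μ 1) = (v - 1) ^ 2 / v := by
    rw [relFisher_normal hv0 one_pos μ μ]
    field_simp
    ring
  have hdiff : relFisher (normalPDF μ v) (normalPDF 0 (μ ^ 2 + v))
      - relFisher (normalPDF μ v) (normalPDF μ 1)
      = ((2 - v) * μ ^ 2 - (v - 1) ^ 2) / (μ ^ 2 + v) := by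
    rw [hD2, hD1]
    field_simp
    ring
  have hBnn : 0 ≤ BH v := by rw [BH]; positivity
  have hBsq : BH v ^ 2 * (2 - v) = (v - 1) ^ 2 := by
    rw [BH, div_pow, sq_abs, Real.sq_sqrt h2v.le]
    field_simp
  have habs : |μ| ^ 2 = μ ^ 2 := sq_abs μ
  -- trichotomy implications
  have himp_lt : |μ| < BH v → relFisher (normalPDF μ v) (normalPDF 0 (μ ^ 2 + v)) <
      relFisher (normalPDF μ v) (normalPDF μ 1) := by
    intro h
    have h1 : μ ^ 2 < BH v ^ 2 := by
      rw [← habs]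
      exact pow_lt_pow_left₀ h (abs_nonneg μ) two_ne_zero
    have hnum : (2 - v) * μ ^ 2 - (v - 1) ^ 2 < 0 := by nlinarith
    have := div_neg_of_neg_of_pos hnum hs
    linarith [hdiff ▸ this]
  have himp_eq : |μ| = BH v → relFisher (normalPDF μ v) (normalPDF 0 (μ ^ 2 + v)) =
      relFisher (normalPDF μ v) (normalPDF μ 1) := by
    intro h
    have h1 : μ ^ 2 = BH v ^ 2 := by rw [← habs, h]
    have hnum : (2 - v) * μ ^ 2 - (v - 1) ^ 2 = 0 := by nlinarith
    have : relFisher (normalPDF μ v) (normalPDF 0 (μ ^ 2 + v))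
        - relFisher (normalPDF μ v) (normalPDF μ 1) = 0 := by
      rw [hdiff, hnum, zero_div]
    linarith
  have himp_gt : BH v < |μ| → relFisher (normalPDF μ v) (normalPDF μ 1) <
      relFisher (normalPDF μ v) (normalPDF 0 (μ ^ 2 + v)) := by
    intro h
    have h1 : BH v ^ 2 < μ ^ 2 := by
      rw [← habs]
      exact pow_lt_pow_left₀ h hBnn two_ne_zero
    have hnum : 0 < (2 - v) * μ ^ 2 - (v - 1) ^ 2 := by nlinarith
    have := div_pos hnum hs
    linarith [hdiff ▸ this]
  refine ⟨⟨fun h => ?_, himp_eq⟩, ⟨fun h => ?_, himp_gt⟩, ⟨fun h => ?_, himp_lt⟩⟩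
  · rcases lt_trichotomy (|μ|) (BH v) with hc | hc | hc
    · exact absurd h (ne_of_lt (himp_lt hc))
    · exact hc
    · exact absurd h (ne_of_gt (himp_gt hc))
  · rcases lt_trichotomy (|μ|) (BH v) with hc | hc | hc
    · exact absurd h (not_lt.mpr (le_of_lt (himp_lt hc)))
    · exact absurd h (not_lt.mpr (le_of_eq (himp_eq hc)))
    · exact hc
  · rcases lt_trichotomy (|μ|) (BH v) with hc | hc | hc
    · exact hc
    · exact absurd h (not_lt.mpr (ge_of_eq (himp_eq hc)))
    · exact absurd h (not_lt.mpr (le_of_lt (himp_gt hc)))
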